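/- Let R be an integral domain of characteristic zero with identity, with fraction field Frac(R), and let P be a polynomial in n indeterminates over R whose evaluation defines a bisymmetric function R^n → R. Then the evaluation of P (viewed via the canonical embedding R[x_1,…,x_n] ⊆ Frac(R)[x_1,…,x_n]) defines a bisymmetric function Frac(R)^n → Frac(R); in other words, every bisymmetric polynomial function on R is the restriction to R of a bisymmetric polynomial function on Frac(R). -/

import Mathlib

/-- A function `f : S^n → S` is bisymmetric if for every `n × n` matrix `X` over `S`,
applying `f` to the rows and then to the results equals applying `f` to the columns
and then to the results. -/
def Bisym {S : Type*} {n : ℕ} (f : (Fin n → S) → S) : Prop :=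
  ∀ X : Fin n → Fin n → S,
    f (fun i => f (X i)) = f (fun j => f (fun i => X i j))

/-- A bisymmetric polynomial function over an integral domain of characteristic zero
extends to a bisymmetric polynomial function over its fraction field. -/
private theorem eval_bind₁' {R σ τ : Type*} [CommSemiring R] (x : τ → R)
    (g : σ → MvPolynomial τ R) (p : MvPolynomial σ R) :
    MvPolynomial.eval x (MvPolynomial.bind₁ g p) =
      MvPolynomial.eval (fun i => MvPolynomial.eval x (g i)) p :=
  MvPolynomial.eval₂Hom_bind₁ _ _ _ _

theorem bisym_extends_to_fractionRing
    {R : Type*} [CommRing R] [IsDomain R] [CharZero R] {n : ℕ}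
    (P : MvPolynomial (Fin n) R)
    (hbi : Bisym fun x : Fin n → R => MvPolynomial.eval x P) :
    Bisym fun x : Fin n → FractionRing R =>
      MvPolynomial.eval x (MvPolynomial.map (algebraMap R (FractionRing R)) P) := by
  classical
  intro X
  set φ := algebraMap R (FractionRing R)
  set Q1 : MvPolynomial (Fin n × Fin n) R :=
    MvPolynomial.bind₁ (fun i => MvPolynomial.rename (Prod.mk i) P) P with hQ1
  set Q2 : MvPolynomial (Fin n × Fin n) R :=
    MvPolynomial.bind₁ (fun j => MvPolynomial.rename (fun i => (i, j)) P) P with hQ2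
  have hQ : Q1 = Q2 := by
    apply MvPolynomial.funext
    intro x
    have h := hbi (fun i j => x (i, j))
    simpa [hQ1, hQ2, eval_bind₁', MvPolynomial.eval_rename,
      Function.comp_def] using h
  have h2 := congrArg
    (fun Q => MvPolynomial.eval (fun p : Fin n × Fin n => X p.1 p.2)
      (MvPolynomial.map φ Q)) hQ
  simpa [hQ1, hQ2, MvPolynomial.map_bind₁, eval_bind₁',
    MvPolynomial.eval_rename, MvPolynomial.map_rename, Function.comp_def] using h2
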